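/- arXiv:1904.02350 — 4 statements merged into one kernel-verified Lean document; each statement's English description precedes it below -/
import Mathlib

section
/- Let |Γ_d⟩ = (1/√N_d) Σ_{j=1}^{d} |11⟩^{⊗j} ⊗ |φ⁺⟩^{⊗(d−j)} ∈ (ℂ²⊗ℂ²)^{⊗d}, where |φ⁺⟩ = (|00⟩+|11⟩)/√2 and N_d is the normalizing constant. Let W be the cyclic left-shift unitary on d+1 qubit-pair registers applied locally on each side (i.e., W_{AA'}⊗W_{BB'} shifts the d+1 pairs). Then ‖(W_{AA'}⊗W_{BB'})(|φ⁺⟩_{AB}⊗|Γ_d⟩) − |11⟩_{AB}⊗|Γ_d⟩‖ = O(1/√d). -/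
open scoped BigOperators

noncomputable section

/-- The state `|11⟩` on a pair of qubits. -/
def e11 : Fin 2 × Fin 2 → ℂ := fun p => if p = (1, 1) then 1 else 0

/-- The EPR pair `|φ⁺⟩ = (|00⟩ + |11⟩)/√2` on a pair of qubits. -/
def phiPlus : Fin 2 × Fin 2 → ℂ := fun p =>
  if p.1 = p.2 then (1 / Real.sqrt 2 : ℝ) else 0

/-- The (unnormalized) `j`-th term `|11⟩^{⊗j} ⊗ |φ⁺⟩^{⊗(d−j)}` of the embezzling state,
on `d` pairs of qubits (pair `i` is in state `|11⟩` for `i < j` and `|φ⁺⟩` otherwise). -/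
def gammaTerm (d : ℕ) (j : ℕ) : EuclideanSpace ℂ (Fin d → Fin 2 × Fin 2) :=
  WithLp.toLp 2 (fun f => ∏ i : Fin d, if (i : ℕ) < j then e11 (f i) else phiPlus (f i))

/-- The normalizing constant `N_d = ‖Σ_{j=1}^d |11⟩^{⊗j} ⊗ |φ⁺⟩^{⊗(d−j)}‖²`. -/
def embNorm (d : ℕ) : ℝ := ‖∑ j ∈ Finset.Icc 1 d, gammaTerm d j‖ ^ 2

/-- The van Dam–Hayden embezzling state
`|Γ_d⟩ = (1/√N_d) Σ_{j=1}^d |11⟩^{⊗j} ⊗ |φ⁺⟩^{⊗(d−j)}`. -/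
def Gamma (d : ℕ) : EuclideanSpace ℂ (Fin d → Fin 2 × Fin 2) :=
  (1 / Real.sqrt (embNorm d) : ℝ) • ∑ j ∈ Finset.Icc 1 d, gammaTerm d j

/-- The cyclic left-shift unitary `W_{AA'} ⊗ W_{BB'}` on `d+1` qubit-pair registers
(register `0` is the pair `AB`; after the shift, register `i` holds the previous
content of register `i+1`, and register `d` holds the previous content of `AB`). -/
def leftShift (d : ℕ) (ψ : EuclideanSpace ℂ (Fin (d + 1) → Fin 2 × Fin 2)) :
    EuclideanSpace ℂ (Fin (d + 1) → Fin 2 × Fin 2) :=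
  WithLp.toLp 2 (fun g => ψ (fun i => g ((finRotate (d + 1)).symm i)))

/-- The state `|φ⁺⟩_{AB} ⊗ |Γ_d⟩_{A'B'}` on `d+1` qubit pairs. -/
def phiPlusGamma (d : ℕ) : EuclideanSpace ℂ (Fin (d + 1) → Fin 2 × Fin 2) :=
  WithLp.toLp 2 (fun g => phiPlus (g 0) * Gamma d (fun i => g i.succ))

/-- The state `|11⟩_{AB} ⊗ |Γ_d⟩_{A'B'}` on `d+1` qubit pairs. -/
def e11Gamma (d : ℕ) : EuclideanSpace ℂ (Fin (d + 1) → Fin 2 × Fin 2) :=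
  WithLp.toLp 2 (fun g => e11 (g 0) * Gamma d (fun i => g i.succ))

/-! ### Auxiliary real-valued versions -/

def e11R : Fin 2 × Fin 2 → ℝ := fun p => if p = (1, 1) then 1 else 0

def phiPlusR : Fin 2 × Fin 2 → ℝ := fun p => if p.1 = p.2 then 1 / Real.sqrt 2 else 0

def gammaTermR (d : ℕ) (j : ℕ) (f : Fin d → Fin 2 × Fin 2) : ℝ :=
  ∏ i : Fin d, if (i : ℕ) < j then e11R (f i) else phiPlusR (f i)

lemma gammaTerm_eq (d j : ℕ) (f : Fin d → Fin 2 × Fin 2) :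
    gammaTerm d j f = (gammaTermR d j f : ℂ) := by
  unfold gammaTerm gammaTermR
  rw [PiLp.toLp_apply]
  push_cast
  refine Finset.prod_congr rfl fun i _ => ?_
  split_ifs
  · simp [e11, e11R, apply_ite (Complex.ofReal)]
  · simp [phiPlus, phiPlusR, apply_ite (Complex.ofReal)]

lemma gammaTermR_nonneg (d j : ℕ) (f : Fin d → Fin 2 × Fin 2) : 0 ≤ gammaTermR d j f := by
  refine Finset.prod_nonneg fun i _ => ?_
  split_ifs
  · unfold e11R; split_ifs <;> norm_num
  · unfold phiPlusR; split_ifs <;> positivity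

lemma sum_e11R_sq : ∑ p : Fin 2 × Fin 2, (e11R p) ^ 2 = 1 := by
  have h : ∀ p : Fin 2 × Fin 2, (e11R p) ^ 2 = if p = (1,1) then 1 else 0 := by
    intro p; unfold e11R; split_ifs <;> norm_num
  simp_rw [h]
  simp

lemma sum_phiPlusR_sq : ∑ p : Fin 2 × Fin 2, (phiPlusR p) ^ 2 = 1 := by
  have h2 : (0:ℝ) ≤ 2 := by norm_num
  simp [Fintype.sum_prod_type, Fin.sum_univ_two, phiPlusR, div_pow, Real.sq_sqrt h2]

lemma sum_gammaTermR_sq (d j : ℕ) :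
    ∑ f : Fin d → Fin 2 × Fin 2, (gammaTermR d j f) ^ 2 = 1 := by
  have : ∀ f : Fin d → Fin 2 × Fin 2, (gammaTermR d j f) ^ 2 =
      ∏ i : Fin d, (if (i : ℕ) < j then (e11R (f i))^2 else (phiPlusR (f i))^2) := by
    intro f
    rw [gammaTermR, ← Finset.prod_pow]
    exact Finset.prod_congr rfl fun i _ => by split_ifs <;> rfl
  simp_rw [this]
  have hswap := Finset.prod_univ_sum (fun _ : Fin d => (Finset.univ : Finset (Fin 2 × Fin 2)))
      (fun i p => if (i : ℕ) < j then (e11R p)^2 else (phiPlusR p)^2)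
  rw [Fintype.piFinset_univ] at hswap
  rw [← hswap]
  refine Finset.prod_eq_one fun i _ => ?_
  split_ifs
  · exact sum_e11R_sq
  · exact sum_phiPlusR_sq

lemma norm_gammaTerm (d j : ℕ) : ‖gammaTerm d j‖ = 1 := by
  have h : ‖gammaTerm d j‖ = Real.sqrt (∑ f, ‖gammaTerm d j f‖ ^ 2) :=
    EuclideanSpace.norm_eq _
  rw [h]
  have : ∀ f : Fin d → Fin 2 × Fin 2, ‖gammaTerm d j f‖ ^ 2 = (gammaTermR d j f) ^ 2 := by
    intro f
    rw [gammaTerm_eq, Complex.norm_real, Real.norm_eq_abs, sq_abs]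
  simp_rw [this, sum_gammaTermR_sq, Real.sqrt_one]

lemma embNorm_ge (d : ℕ) : (d : ℝ) ≤ embNorm d := by
  have h : embNorm d = ∑ f, ‖(∑ j ∈ Finset.Icc 1 d, gammaTerm d j) f‖ ^ 2 := by
    rw [embNorm, EuclideanSpace.norm_eq, Real.sq_sqrt]
    positivity
  rw [h]
  have key : ∀ f : Fin d → Fin 2 × Fin 2,
      ∑ j ∈ Finset.Icc 1 d, (gammaTermR d j f) ^ 2 ≤
        ‖(∑ j ∈ Finset.Icc 1 d, gammaTerm d j) f‖ ^ 2 := by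
    intro f
    have happ : (∑ j ∈ Finset.Icc 1 d, gammaTerm d j) f
        = ((∑ j ∈ Finset.Icc 1 d, gammaTermR d j f : ℝ) : ℂ) := by
      push_cast
      rw [WithLp.ofLp_sum, Finset.sum_apply]
      exact Finset.sum_congr rfl fun j _ => gammaTerm_eq d j f
    rw [happ, Complex.norm_real, Real.norm_eq_abs, sq_abs]
    calc ∑ j ∈ Finset.Icc 1 d, (gammaTermR d j f) ^ 2
        ≤ ∑ j ∈ Finset.Icc 1 d, gammaTermR d j f * ∑ k ∈ Finset.Icc 1 d, gammaTermR d k f := by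
          refine Finset.sum_le_sum fun j hj => ?_
          rw [sq]
          exact mul_le_mul_of_nonneg_left
            (Finset.single_le_sum (fun k _ => gammaTermR_nonneg d k f) hj)
            (gammaTermR_nonneg d j f)
      _ = (∑ j ∈ Finset.Icc 1 d, gammaTermR d j f) ^ 2 := by rw [← Finset.sum_mul, sq]
  calc (d : ℝ) = ∑ j ∈ Finset.Icc 1 d, ∑ f : Fin d → Fin 2 × Fin 2, (gammaTermR d j f)^2 := by
        simp [sum_gammaTermR_sq]
    _ = ∑ f : Fin d → Fin 2 × Fin 2, ∑ j ∈ Finset.Icc 1 d, (gammaTermR d j f)^2 :=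
        Finset.sum_comm
    _ ≤ _ := Finset.sum_le_sum fun f _ => key f

lemma embNorm_nonneg (d : ℕ) : 0 ≤ embNorm d := by rw [embNorm]; positivity

lemma claimA (d j : ℕ) (hj : j ≤ d) (g : Fin (d + 1) → Fin 2 × Fin 2) :
    phiPlus (g (Fin.last d)) * gammaTerm d j (fun k => g k.castSucc)
      = gammaTerm (d + 1) j g := by
  unfold gammaTerm
  simp only [PiLp.toLp_apply]
  rw [Fin.prod_univ_castSucc]
  have hlast : ¬ ((Fin.last d : Fin (d+1)) : ℕ) < j := by
    simp only [Fin.val_last]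
    omega
  rw [if_neg hlast, mul_comm]
  congr 1

lemma claimB (d j : ℕ) (g : Fin (d + 1) → Fin 2 × Fin 2) :
    e11 (g 0) * gammaTerm d j (fun k => g k.succ) = gammaTerm (d + 1) (j + 1) g := by
  unfold gammaTerm
  simp only [PiLp.toLp_apply]
  rw [Fin.prod_univ_succ]
  have h0 : ((0 : Fin (d+1)) : ℕ) < j + 1 := by simp
  rw [if_pos h0]
  congr 1
  refine Finset.prod_congr rfl fun i _ => ?_
  have : ((i.succ : Fin (d+1)) : ℕ) < j + 1 ↔ (i : ℕ) < j := by
    simp [Fin.val_succ]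
  simp only [Fin.val_succ]
  by_cases hij : (i : ℕ) < j
  · rw [if_pos hij, if_pos (by omega)]
  · rw [if_neg hij, if_neg (by omega)]

lemma rotate_zero (d : ℕ) : (finRotate (d + 1)).symm 0 = Fin.last d := by
  rw [Equiv.symm_apply_eq, finRotate_last]

lemma rotate_succ (d : ℕ) (k : Fin d) : (finRotate (d + 1)).symm k.succ = k.castSucc := by
  rw [Equiv.symm_apply_eq, finRotate_succ_apply, Fin.coeSucc_eq_succ]

lemma key_identity (d : ℕ) (hd : 1 ≤ d) :
    leftShift d (phiPlusGamma d) - e11Gamma d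
      = (1 / Real.sqrt (embNorm d) : ℝ) • (gammaTerm (d+1) 1 - gammaTerm (d+1) (d+1)) := by
  ext g
  have hls : (leftShift d (phiPlusGamma d)) g
      = phiPlus (g (Fin.last d)) * Gamma d (fun k => g k.castSucc) := by
    unfold leftShift phiPlusGamma
    simp only [PiLp.toLp_apply, rotate_zero]
    have hfun : (fun i : Fin d => g ((finRotate (d+1)).symm i.succ))
        = fun k : Fin d => g k.castSucc := funext fun k => congrArg g (rotate_succ d k)
    rw [hfun]
  have happly : ∀ (c : ℝ) (v w : EuclideanSpace ℂ (Fin (d+1) → Fin 2 × Fin 2)),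
      (c • (v - w)) g = (c : ℂ) * (v g - w g) := fun c v w => by
    simp [Complex.real_smul]
  show (leftShift d (phiPlusGamma d)) g - e11Gamma d g = _
  rw [happly, hls]
  unfold e11Gamma Gamma
  simp only [PiLp.toLp_apply]
  have hsmul : ∀ (c : ℝ) (v : EuclideanSpace ℂ (Fin d → Fin 2 × Fin 2))
      (f : Fin d → Fin 2 × Fin 2), (c • v) f = (c : ℂ) * v f := fun c v f => by
    simp [Complex.real_smul]
  rw [hsmul, hsmul]
  set c : ℂ := ((1 / Real.sqrt (embNorm d) : ℝ) : ℂ)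
  rw [WithLp.ofLp_sum, Finset.sum_apply, Finset.sum_apply]
  rw [mul_comm (phiPlus (g (Fin.last d))), mul_assoc, mul_comm (e11 (g 0)), mul_assoc]
  rw [← mul_sub]
  congr 1
  rw [Finset.sum_mul, Finset.sum_mul]
  have hA : ∀ j ∈ Finset.Icc 1 d, gammaTerm d j (fun k => g k.castSucc) * phiPlus (g (Fin.last d))
      = gammaTerm (d+1) j g := by
    intro j hj
    rw [mul_comm]
    exact claimA d j (Finset.mem_Icc.mp hj).2 g
  have hB : ∀ j ∈ Finset.Icc 1 d, gammaTerm d j (fun k => g k.succ) * e11 (g 0)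
      = gammaTerm (d+1) (j+1) g := by
    intro j _
    rw [mul_comm]
    exact claimB d j g
  rw [Finset.sum_congr rfl hA, Finset.sum_congr rfl hB]
  have : Finset.Icc 1 d = Finset.Ico 1 (d + 1) := by
    ext x; simp [Nat.lt_succ_iff]
  rw [this, Finset.sum_Ico_eq_sum_range, Finset.sum_Ico_eq_sum_range]
  simp only [Nat.add_sub_cancel]
  rw [← Finset.sum_sub_distrib]
  have htel := Finset.sum_range_sub' (fun i => gammaTerm (d+1) (1+i) g) d
  simpa [Nat.add_comm] using htel

/-- The family `{|Γ_d⟩}` is an embezzling family: the local cyclic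
left-shift unitaries transform `|φ⁺⟩_{AB} ⊗ |Γ_d⟩` into `|11⟩_{AB} ⊗ |Γ_d⟩` up to an
error of `O(1/√d)` in Euclidean norm. -/
theorem embezzlement_shift_error :
    ∃ C > 0, ∀ d : ℕ, 1 ≤ d →
      ‖leftShift d (phiPlusGamma d) - e11Gamma d‖ ≤ C / Real.sqrt d := by
  refine ⟨2, by norm_num, fun d hd => ?_⟩
  rw [key_identity d hd]
  have hN : (d : ℝ) ≤ embNorm d := embNorm_ge d
  have hNpos : (0 : ℝ) < embNorm d := lt_of_lt_of_le (by exact_mod_cast hd) hN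
  have hsq : Real.sqrt (d : ℝ) ≤ Real.sqrt (embNorm d) := Real.sqrt_le_sqrt hN
  have hsqd : (0 : ℝ) < Real.sqrt d := Real.sqrt_pos.mpr (by exact_mod_cast hd)
  rw [norm_smul]
  have hnorm2 : ‖gammaTerm (d+1) 1 - gammaTerm (d+1) (d+1)‖ ≤ 2 := by
    calc ‖gammaTerm (d+1) 1 - gammaTerm (d+1) (d+1)‖
        ≤ ‖gammaTerm (d+1) 1‖ + ‖gammaTerm (d+1) (d+1)‖ := norm_sub_le _ _
      _ = 2 := by rw [norm_gammaTerm, norm_gammaTerm]; norm_num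
  have hcn : ‖(1 / Real.sqrt (embNorm d) : ℝ)‖ = 1 / Real.sqrt (embNorm d) := by
    rw [Real.norm_eq_abs, abs_of_nonneg]; positivity
  rw [hcn]
  calc (1 / Real.sqrt (embNorm d)) * ‖gammaTerm (d+1) 1 - gammaTerm (d+1) (d+1)‖
      ≤ (1 / Real.sqrt (embNorm d)) * 2 := by
        apply mul_le_mul_of_nonneg_left hnorm2; positivity
    _ ≤ (1 / Real.sqrt d) * 2 := by
        apply mul_le_mul_of_nonneg_right _ (by norm_num)
        exact one_div_le_one_div_of_le hsqd hsq
    _ = 2 / Real.sqrt d := by ring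

end
end

section
/- For binary observables A₀, A₁ on H_A and B₀, B₁ on H_B (Hermitian with A_i² = I, B_j² = I) and any product unit vector |φ⟩ = |φ_A⟩⊗|φ_B⟩, and any β ∈ [0,2): ⟨φ| βA₀⊗I + A₀⊗B₀ + A₀⊗B₁ + A₁⊗B₀ − A₁⊗B₁ |φ⟩ ≤ 2 + β. -/
open Kronecker Matrix

lemma kron_factor {m n : Type*} [Fintype m] [Fintype n]
    (M : Matrix m m ℂ) (N : Matrix n n ℂ) (φA : m → ℂ) (φB : n → ℂ) :
    star (fun p : m × n => φA p.1 * φB p.2) ⬝ᵥ ((M ⊗ₖ N) *ᵥ fun p : m × n => φA p.1 * φB p.2)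
      = (star φA ⬝ᵥ (M *ᵥ φA)) * (star φB ⬝ᵥ (N *ᵥ φB)) := by
  have hmv : ∀ p : m × n, ((M ⊗ₖ N) *ᵥ fun p : m × n => φA p.1 * φB p.2) p
      = (M *ᵥ φA) p.1 * (N *ᵥ φB) p.2 := by
    rintro ⟨i, j⟩
    show ∑ q : m × n, _ = _
    rw [mulVec, mulVec, dotProduct, dotProduct, Finset.sum_mul_sum, Fintype.sum_prod_type]
    exact Finset.sum_congr rfl fun k _ => Finset.sum_congr rfl fun l _ => by
      simp [kroneckerMap_apply]; ring
  rw [dotProduct, dotProduct, dotProduct, Finset.sum_mul_sum, Fintype.sum_prod_type]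
  exact Finset.sum_congr rfl fun i _ => Finset.sum_congr rfl fun j _ => by
    simp [hmv (i, j), star_mul']; ring

lemma exp_real_bdd {m : Type*} [Fintype m] [DecidableEq m]
    (M : Matrix m m ℂ) (hM : M.IsHermitian) (hMsq : M * M = 1)
    (φ : m → ℂ) (hφ : star φ ⬝ᵥ φ = 1) :
    ∃ x : ℝ, star φ ⬝ᵥ (M *ᵥ φ) = (x : ℂ) ∧ |x| ≤ 1 := by
  have hreal : star (star φ ⬝ᵥ (M *ᵥ φ)) = star φ ⬝ᵥ (M *ᵥ φ) := by
    rw [← star_dotProduct, star_mulVec, dotProduct_mulVec, hM.eq]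
  set e := star φ ⬝ᵥ (M *ᵥ φ) with he
  refine ⟨e.re, ?_, ?_⟩
  · exact (Complex.conj_eq_iff_re.mp hreal).symm
  · have hMφ : star (M *ᵥ φ) ⬝ᵥ (M *ᵥ φ) = 1 := by
      rw [star_mulVec, dotProduct_mulVec, vecMul_vecMul, hM.eq, hMsq, vecMul_one, hφ]
    set u : EuclideanSpace ℂ m := (WithLp.equiv 2 _).symm φ
    set v : EuclideanSpace ℂ m := (WithLp.equiv 2 _).symm (M *ᵥ φ)
    have hu : ‖u‖ = 1 := by
      have : (inner ℂ u u : ℂ) = 1 := by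
        show φ ⬝ᵥ star φ = 1; rw [dotProduct_comm]; exact hφ
      have h2 : ‖u‖ ^ 2 = 1 := by
        rw [← inner_self_eq_norm_sq (𝕜 := ℂ), this]; simp
      nlinarith [norm_nonneg u, h2]
    have hv : ‖v‖ = 1 := by
      have : (inner ℂ v v : ℂ) = 1 := by
        show (M *ᵥ φ) ⬝ᵥ star (M *ᵥ φ) = 1; rw [dotProduct_comm]; exact hMφ
      have h2 : ‖v‖ ^ 2 = 1 := by
        rw [← inner_self_eq_norm_sq (𝕜 := ℂ), this]; simp
      nlinarith [norm_nonneg v, h2]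
    have hcs := norm_inner_le_norm (𝕜 := ℂ) u v
    have hin : inner ℂ u v = star φ ⬝ᵥ (M *ᵥ φ) := by
      show (M *ᵥ φ) ⬝ᵥ star φ = _; rw [dotProduct_comm]
    rw [hu, hv, hin] at hcs
    have : ‖e‖ ≤ 1 := by simpa using hcs
    calc |e.re| ≤ ‖e‖ := Complex.abs_re_le_norm e
      _ ≤ 1 := this

/-- The tilted CHSH inequality for product states: for binary
observables `A₀, A₁` on `H_A` and `B₀, B₁` on `H_B` (Hermitian, squaring to `1`),
a product unit vector `φ = φ_A ⊗ φ_B`, and `β ∈ [0,2)`,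
`⟨φ| βA₀⊗1 + A₀⊗B₀ + A₀⊗B₁ + A₁⊗B₀ − A₁⊗B₁ |φ⟩ ≤ 2 + β`. -/
theorem tilted_chsh_product_bound {m n : Type*} [Fintype m] [DecidableEq m]
    [Fintype n] [DecidableEq n]
    (A₀ A₁ : Matrix m m ℂ) (B₀ B₁ : Matrix n n ℂ)
    (hA₀ : A₀.IsHermitian) (hA₁ : A₁.IsHermitian)
    (hB₀ : B₀.IsHermitian) (hB₁ : B₁.IsHermitian)
    (hA₀sq : A₀ * A₀ = 1) (hA₁sq : A₁ * A₁ = 1)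
    (hB₀sq : B₀ * B₀ = 1) (hB₁sq : B₁ * B₁ = 1)
    (φA : m → ℂ) (φB : n → ℂ)
    (hφA : star φA ⬝ᵥ φA = 1) (hφB : star φB ⬝ᵥ φB = 1)
    (β : ℝ) (hβ0 : 0 ≤ β) (hβ2 : β < 2) :
    (star (fun p : m × n => φA p.1 * φB p.2) ⬝ᵥ
      (((β : ℂ) • (A₀ ⊗ₖ (1 : Matrix n n ℂ)) + A₀ ⊗ₖ B₀ + A₀ ⊗ₖ B₁ + A₁ ⊗ₖ B₀ - A₁ ⊗ₖ B₁) *ᵥ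
        fun p : m × n => φA p.1 * φB p.2)).re ≤ 2 + β := by
  obtain ⟨a₀, ha₀, ha₀b⟩ := exp_real_bdd A₀ hA₀ hA₀sq φA hφA
  obtain ⟨a₁, ha₁, ha₁b⟩ := exp_real_bdd A₁ hA₁ hA₁sq φA hφA
  obtain ⟨b₀, hb₀, hb₀b⟩ := exp_real_bdd B₀ hB₀ hB₀sq φB hφB
  obtain ⟨b₁, hb₁, hb₁b⟩ := exp_real_bdd B₁ hB₁ hB₁sq φB hφB
  have hone : star φB ⬝ᵥ ((1 : Matrix n n ℂ) *ᵥ φB) = 1 := by rw [one_mulVec, hφB]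
  have hexp : (star (fun p : m × n => φA p.1 * φB p.2) ⬝ᵥ
      (((β : ℂ) • (A₀ ⊗ₖ (1 : Matrix n n ℂ)) + A₀ ⊗ₖ B₀ + A₀ ⊗ₖ B₁ + A₁ ⊗ₖ B₀ - A₁ ⊗ₖ B₁) *ᵥ
        fun p : m × n => φA p.1 * φB p.2))
      = ((β * a₀ + a₀ * b₀ + a₀ * b₁ + a₁ * b₀ - a₁ * b₁ : ℝ) : ℂ) := by
    rw [sub_mulVec, add_mulVec, add_mulVec, add_mulVec, smul_mulVec,
      dotProduct_sub, dotProduct_add, dotProduct_add, dotProduct_add, dotProduct_smul,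
      kron_factor, kron_factor, kron_factor, kron_factor, kron_factor,
      ha₀, ha₁, hb₀, hb₁, hone]
    push_cast
    simp only [smul_eq_mul]
    ring
  rw [hexp, Complex.ofReal_re]
  obtain ⟨ha₀l, ha₀r⟩ := abs_le.mp ha₀b
  obtain ⟨ha₁l, ha₁r⟩ := abs_le.mp ha₁b
  obtain ⟨hb₀l, hb₀r⟩ := abs_le.mp hb₀b
  obtain ⟨hb₁l, hb₁r⟩ := abs_le.mp hb₁b
  have h1 : a₀ * (b₀ + b₁) ≤ |b₀ + b₁| := by
    calc a₀ * (b₀ + b₁) ≤ |a₀ * (b₀ + b₁)| := le_abs_self _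
      _ = |a₀| * |b₀ + b₁| := abs_mul _ _
      _ ≤ 1 * |b₀ + b₁| := mul_le_mul_of_nonneg_right ha₀b (abs_nonneg _)
      _ = |b₀ + b₁| := one_mul _
  have h2 : a₁ * (b₀ - b₁) ≤ |b₀ - b₁| := by
    calc a₁ * (b₀ - b₁) ≤ |a₁ * (b₀ - b₁)| := le_abs_self _
      _ = |a₁| * |b₀ - b₁| := abs_mul _ _
      _ ≤ 1 * |b₀ - b₁| := mul_le_mul_of_nonneg_right ha₁b (abs_nonneg _)
      _ = |b₀ - b₁| := one_mul _
  have h3 : |b₀ + b₁| + |b₀ - b₁| ≤ 2 := by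
    rcases abs_cases (b₀ + b₁) with ⟨e1, _⟩ | ⟨e1, _⟩ <;>
      rcases abs_cases (b₀ - b₁) with ⟨e2, _⟩ | ⟨e2, _⟩ <;> linarith
  have h4 : β * a₀ ≤ β := by nlinarith
  nlinarith [h1, h2, h3, h4]
end

section
/- For binary observables A₀, A₁ on H_A and B₀, B₁ on H_B and any unit vector |ψ⟩ ∈ H_A⊗H_B, and any β ∈ [0,2): ⟨ψ| βA₀⊗I + A₀⊗B₀ + A₀⊗B₁ + A₁⊗B₀ − A₁⊗B₁ |ψ⟩ ≤ √(8 + 2β²). -/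
open Kronecker Matrix

private lemma kron_conjT {m n : Type*} [Fintype m] [Fintype n]
    (X : Matrix m m ℂ) (Y : Matrix n n ℂ) :
    (X ⊗ₖ Y)ᴴ = Xᴴ ⊗ₖ Yᴴ := by
  ext ⟨i, j⟩ ⟨k, l⟩
  simp [Matrix.conjTranspose_apply, Matrix.kroneckerMap_apply, star_mul']

/-- The tilted CHSH (Tsirelson-type) bound: for binary observables
`A₀, A₁` on `H_A` and `B₀, B₁` on `H_B`, any unit vector `ψ ∈ H_A ⊗ H_B`, and
`β ∈ [0,2)`, `⟨ψ| βA₀⊗1 + A₀⊗B₀ + A₀⊗B₁ + A₁⊗B₀ − A₁⊗B₁ |ψ⟩ ≤ √(8 + 2β²)`. -/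
theorem tilted_chsh_quantum_bound {m n : Type*} [Fintype m] [DecidableEq m]
    [Fintype n] [DecidableEq n]
    (A₀ A₁ : Matrix m m ℂ) (B₀ B₁ : Matrix n n ℂ)
    (hA₀ : A₀.IsHermitian) (hA₁ : A₁.IsHermitian)
    (hB₀ : B₀.IsHermitian) (hB₁ : B₁.IsHermitian)
    (hA₀sq : A₀ * A₀ = 1) (hA₁sq : A₁ * A₁ = 1)
    (hB₀sq : B₀ * B₀ = 1) (hB₁sq : B₁ * B₁ = 1)
    (ψ : m × n → ℂ) (hψ : star ψ ⬝ᵥ ψ = 1)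
    (β : ℝ) (hβ0 : 0 ≤ β) (hβ2 : β < 2) :
    (star ψ ⬝ᵥ
      (((β : ℂ) • (A₀ ⊗ₖ (1 : Matrix n n ℂ)) + A₀ ⊗ₖ B₀ + A₀ ⊗ₖ B₁ + A₁ ⊗ₖ B₀ - A₁ ⊗ₖ B₁) *ᵥ
        ψ)).re ≤ Real.sqrt (8 + 2 * β ^ 2) := by
  classical
  set H : Matrix (m × n) (m × n) ℂ :=
    (β : ℂ) • (A₀ ⊗ₖ (1 : Matrix n n ℂ)) + A₀ ⊗ₖ B₀ + A₀ ⊗ₖ B₁ + A₁ ⊗ₖ B₀ - A₁ ⊗ₖ B₁ with hH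
  set Q : Matrix (m × n) (m × n) ℂ :=
    (-(β : ℂ)) • (A₁ ⊗ₖ (1 : Matrix n n ℂ)) + A₀ ⊗ₖ B₀ - A₀ ⊗ₖ B₁ + A₁ ⊗ₖ B₀ + A₁ ⊗ₖ B₁ with hQ
  -- the sum-of-squares certificate
  have key : H * H + Q * Q = (((8 + 2 * β ^ 2 : ℝ) : ℂ)) • (1 : Matrix (m × n) (m × n) ℂ) := by
    rw [hH, hQ]
    simp only [add_mul, mul_add, sub_mul, mul_sub, smul_mul_assoc, mul_smul_comm, smul_smul,
      ← Matrix.mul_kronecker_mul, Matrix.mul_one, Matrix.one_mul,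
      hA₀sq, hA₁sq, hB₀sq, hB₁sq, Matrix.one_kronecker_one,
      smul_sub, smul_add, neg_smul, neg_mul, mul_neg, neg_neg, smul_neg]
    push_cast
    module
  -- Hermiticity of H and Q
  have hHerm : Hᴴ = H := by
    rw [hH]
    simp only [Matrix.conjTranspose_add, Matrix.conjTranspose_sub, Matrix.conjTranspose_smul,
      kron_conjT, Matrix.conjTranspose_one, hA₀.eq, hA₁.eq, hB₀.eq, hB₁.eq,
      Complex.star_def, Complex.conj_ofReal]
  have hQerm : Qᴴ = Q := by
    rw [hQ]
    simp only [Matrix.conjTranspose_add, Matrix.conjTranspose_sub, Matrix.conjTranspose_smul,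
      kron_conjT, Matrix.conjTranspose_one, hA₀.eq, hA₁.eq, hB₀.eq, hB₁.eq,
      Complex.star_def, map_neg, Complex.conj_ofReal]
  set v : m × n → ℂ := H *ᵥ ψ with hv
  set w : m × n → ℂ := Q *ᵥ ψ with hw
  have hvform : star ψ ⬝ᵥ ((H * H) *ᵥ ψ) = star v ⬝ᵥ v := by
    rw [hv, ← Matrix.mulVec_mulVec, Matrix.star_mulVec, hHerm, ← Matrix.dotProduct_mulVec]
  have hwform : star ψ ⬝ᵥ ((Q * Q) *ᵥ ψ) = star w ⬝ᵥ w := by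
    rw [hw, ← Matrix.mulVec_mulVec, Matrix.star_mulVec, hQerm, ← Matrix.dotProduct_mulVec]
  have hsum : star v ⬝ᵥ v + star w ⬝ᵥ w = ((8 + 2 * β ^ 2 : ℝ) : ℂ) := by
    rw [← hvform, ← hwform, ← dotProduct_add, ← Matrix.add_mulVec, key,
      Matrix.smul_mulVec, Matrix.one_mulVec, dotProduct_smul, hψ]
    simp
  -- move to EuclideanSpace
  set Ψ : EuclideanSpace ℂ (m × n) := (WithLp.equiv 2 _).symm ψ with hΨ
  set V : EuclideanSpace ℂ (m × n) := (WithLp.equiv 2 _).symm v with hV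
  set W : EuclideanSpace ℂ (m × n) := (WithLp.equiv 2 _).symm w with hW
  have hinnerΨV : (inner ℂ Ψ V : ℂ) = star ψ ⬝ᵥ v := by rw [dotProduct_comm]; rfl
  have hinnerVV : (inner ℂ V V : ℂ) = star v ⬝ᵥ v := by rw [dotProduct_comm]; rfl
  have hinnerWW : (inner ℂ W W : ℂ) = star w ⬝ᵥ w := by rw [dotProduct_comm]; rfl
  have hinnerΨΨ : (inner ℂ Ψ Ψ : ℂ) = star ψ ⬝ᵥ ψ := by rw [dotProduct_comm]; rfl
  have hnorm : ∀ x : EuclideanSpace ℂ (m × n), (inner ℂ x x : ℂ).re = ‖x‖ ^ 2 := by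
    intro x
    have := inner_self_eq_norm_sq (𝕜 := ℂ) x
    rwa [RCLike.re_to_complex] at this
  have hnΨ : ‖Ψ‖ = 1 := by
    have h1 : ‖Ψ‖ ^ 2 = 1 := by
      rw [← hnorm Ψ, hinnerΨΨ, hψ, Complex.one_re]
    nlinarith [norm_nonneg Ψ]
  have hnV : ‖V‖ ^ 2 ≤ 8 + 2 * β ^ 2 := by
    have h3 := congrArg Complex.re hsum
    rw [Complex.add_re, Complex.ofReal_re] at h3
    have h2 : ‖V‖ ^ 2 + ‖W‖ ^ 2 = 8 + 2 * β ^ 2 := by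
      rw [← hnorm V, ← hnorm W, hinnerVV, hinnerWW]
      exact h3
    nlinarith [sq_nonneg ‖W‖]
  have hre : (star ψ ⬝ᵥ (H *ᵥ ψ)).re ≤ ‖V‖ := by
    have hcs := re_inner_le_norm (𝕜 := ℂ) Ψ V
    rw [RCLike.re_to_complex] at hcs
    calc (star ψ ⬝ᵥ (H *ᵥ ψ)).re = Complex.re (inner ℂ Ψ V) := by rw [hinnerΨV, hv]
    _ ≤ ‖Ψ‖ * ‖V‖ := hcs
    _ = ‖V‖ := by rw [hnΨ, one_mul]
  have hVle : ‖V‖ ≤ Real.sqrt (8 + 2 * β ^ 2) := by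
    have := Real.sqrt_le_sqrt hnV
    rwa [Real.sqrt_sq (norm_nonneg V)] at this
  exact hre.trans hVle
end

section
/- The shift-embezzlement computation: with |Γ_d⟩ = (1/√N_d) Σ_{j=1}^{d} |11⟩^{⊗j}|φ⁺⟩^{⊗(d−j)}, the left-shift unitaries map |φ⁺⟩_{AB}⊗|Γ_d⟩ to (1/√N_d) Σ_{j=1}^{d} |11⟩^{⊗j}|φ⁺⟩^{⊗(d−j)}⊗|φ⁺⟩ reinterpreted so that the resulting state equals (1/√N_d) Σ_{j=0}^{d−1} |11⟩_{AB}⊗(|11⟩^{⊗j}|φ⁺⟩^{⊗(d−j−1)}) + (error term), and the inner product ⟨11⊗Γ_d | W(φ⁺⊗Γ_d)⟩ = (N_d − O(√d))/N_d = 1 − O(1/d). -/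
open scoped BigOperators InnerProductSpace

noncomputable section

private lemma sum_ee : ∑ p : Fin 2 × Fin 2, (starRingEnd ℂ) (e11 p) * e11 p = 1 := by
  simp [e11, Fintype.sum_prod_type, Fin.sum_univ_succ]

private lemma inv_sqrt_two_sq : ((Real.sqrt 2)⁻¹ : ℝ) * (Real.sqrt 2)⁻¹ = 1 / 2 := by
  rw [← mul_inv, Real.mul_self_sqrt (by norm_num)]
  norm_num

private lemma sum_pp : ∑ p : Fin 2 × Fin 2, (starRingEnd ℂ) (phiPlus p) * phiPlus p = 1 := by
  simp only [phiPlus, Fintype.sum_prod_type, Fin.sum_univ_succ]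
  norm_num [← Complex.ofReal_inv, ← Complex.ofReal_mul, ← Complex.ofReal_add, inv_sqrt_two_sq]

private lemma sum_ep : ∑ p : Fin 2 × Fin 2, (starRingEnd ℂ) (e11 p) * phiPlus p
    = ((Real.sqrt 2)⁻¹ : ℝ) := by
  simp [e11, phiPlus, Fintype.sum_prod_type, Fin.sum_univ_succ, one_div]

private lemma sum_pe : ∑ p : Fin 2 × Fin 2, (starRingEnd ℂ) (phiPlus p) * e11 p
    = ((Real.sqrt 2)⁻¹ : ℝ) := by
  simp [e11, phiPlus, Fintype.sum_prod_type, Fin.sum_univ_succ, one_div]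

private lemma gammaTerm_inner (d j k : ℕ) (hj : j ≤ d) (hk : k ≤ d) :
    ⟪gammaTerm d j, gammaTerm d k⟫_ℂ = (((Real.sqrt 2)⁻¹ ^ Nat.dist j k : ℝ) : ℂ) := by
  rw [PiLp.inner_apply]
  simp only [RCLike.inner_apply', gammaTerm, PiLp.toLp_apply]
  set F : Fin d → (Fin 2 × Fin 2) → ℂ := fun i c =>
    (starRingEnd ℂ) (if (i : ℕ) < j then e11 c else phiPlus c) *
      (if (i : ℕ) < k then e11 c else phiPlus c) with hF
  have h1 : ∀ f : Fin d → Fin 2 × Fin 2,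
      (starRingEnd ℂ) (∏ i : Fin d, if (i : ℕ) < j then e11 (f i) else phiPlus (f i)) *
        (∏ i : Fin d, if (i : ℕ) < k then e11 (f i) else phiPlus (f i))
      = ∏ i : Fin d, F i (f i) := by
    intro f
    rw [map_prod, ← Finset.prod_mul_distrib]
  rw [Finset.sum_congr rfl fun f _ => h1 f, ← Fintype.piFinset_univ,
    ← Finset.prod_univ_sum (fun _ => Finset.univ) F]
  have h2 : ∀ i : Fin d, (∑ p : Fin 2 × Fin 2, F i p)
      = if ((i : ℕ) < j ↔ (i : ℕ) < k) then (1 : ℂ) else (((Real.sqrt 2)⁻¹ : ℝ) : ℂ) := by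
    intro i
    by_cases h1 : (i : ℕ) < j <;> by_cases h2 : (i : ℕ) < k <;>
      simp only [hF, h1, h2, if_true, if_false, iff_true, iff_false, not_lt] <;>
      first
        | simpa using sum_ee
        | simpa using sum_pp
        | simpa [h1, h2] using sum_ep
        | simpa [h1, h2] using sum_pe
  rw [Finset.prod_congr rfl fun i _ => h2 i]
  rw [show (∏ i : Fin d, if ((i:ℕ) < j ↔ (i:ℕ) < k) then (1:ℂ) else (((Real.sqrt 2)⁻¹ : ℝ):ℂ))
      = ∏ n ∈ Finset.range d, (if (n < j ↔ n < k) then (1:ℂ) else (((Real.sqrt 2)⁻¹ : ℝ):ℂ))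
    from Fin.prod_univ_eq_prod_range
      (fun n => if (n < j ↔ n < k) then (1:ℂ) else (((Real.sqrt 2)⁻¹ : ℝ):ℂ)) d]
  rw [Finset.prod_ite, Finset.prod_const_one, one_mul, Finset.prod_const]
  have hcard : (Finset.filter (fun n => ¬(n < j ↔ n < k)) (Finset.range d)).card
      = Nat.dist j k := by
    have : Finset.filter (fun n => ¬(n < j ↔ n < k)) (Finset.range d)
        = Finset.Ico (min j k) (max j k) := by
      ext n
      simp only [Finset.mem_filter, Finset.mem_range, Finset.mem_Ico]
      omega
    rw [this, Nat.card_Ico, Nat.dist]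
    omega
  rw [hcard]
  push_cast
  ring

private lemma e11_mul_gammaTerm (d j : ℕ) (g : Fin (d+1) → Fin 2 × Fin 2) :
    e11 (g 0) * gammaTerm d j (fun i => g i.succ) = gammaTerm (d+1) (j+1) g := by
  simp only [gammaTerm, PiLp.toLp_apply]
  rw [Fin.prod_univ_succ]
  congr 1
  · norm_num

private lemma phiPlus_mul_gammaTerm (d j : ℕ) (hj : j ≤ d) (g : Fin (d+1) → Fin 2 × Fin 2) :
    phiPlus (g (Fin.last d)) * gammaTerm d j (fun i => g i.castSucc)
      = gammaTerm (d+1) j g := by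
  simp only [gammaTerm, PiLp.toLp_apply]
  rw [Fin.prod_univ_castSucc, mul_comm]
  congr 1
  simp [Fin.val_last, not_lt.mpr hj]

private lemma e11Gamma_eq (d : ℕ) : e11Gamma d
    = (1 / Real.sqrt (embNorm d) : ℝ) • ∑ j ∈ Finset.Icc 1 d, gammaTerm (d+1) (j+1) := by
  ext g
  simp only [e11Gamma, Gamma, PiLp.smul_apply, Complex.real_smul, PiLp.toLp_apply, WithLp.ofLp_sum]
  rw [Finset.sum_apply, Finset.sum_apply, Finset.mul_sum, Finset.mul_sum, Finset.mul_sum]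
  refine Finset.sum_congr rfl fun j _ => ?_
  rw [← e11_mul_gammaTerm d j g]
  ring

private lemma leftShift_phiPlusGamma_eq (d : ℕ) : leftShift d (phiPlusGamma d)
    = (1 / Real.sqrt (embNorm d) : ℝ) • ∑ j ∈ Finset.Icc 1 d, gammaTerm (d+1) j := by
  ext g
  simp only [leftShift, phiPlusGamma, Gamma, PiLp.smul_apply, Complex.real_smul, PiLp.toLp_apply,
    WithLp.ofLp_sum]
  rw [Finset.sum_apply, Finset.sum_apply, Finset.mul_sum, Finset.mul_sum, Finset.mul_sum]
  have h0 : (finRotate (d+1)).symm 0 = Fin.last d := by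
    rw [Equiv.symm_apply_eq, finRotate_succ_apply, Fin.last_add_one]
  have hs : ∀ i : Fin d, (finRotate (d+1)).symm i.succ = i.castSucc := fun i => by
    rw [Equiv.symm_apply_eq, finRotate_succ_apply, Fin.coeSucc_eq_succ]
  rw [h0]
  refine Finset.sum_congr rfl fun j hj => ?_
  have hfun : (fun i : Fin d => g ((finRotate (d+1)).symm i.succ))
      = (fun i : Fin d => g i.castSucc) := funext fun i => by rw [hs i]
  rw [hfun, ← phiPlus_mul_gammaTerm d j (Finset.mem_Icc.mp hj).2 g]
  ring

private lemma inner_sum_sum (D : ℕ) (a b : ℕ → ℕ) (s : Finset ℕ)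
    (ha : ∀ j ∈ s, a j ≤ D) (hb : ∀ k ∈ s, b k ≤ D) :
    ⟪∑ j ∈ s, gammaTerm D (a j), ∑ k ∈ s, gammaTerm D (b k)⟫_ℂ
      = ((∑ j ∈ s, ∑ k ∈ s, ((Real.sqrt 2)⁻¹ ^ Nat.dist (a j) (b k)) : ℝ) : ℂ) := by
  rw [sum_inner]
  push_cast
  refine Finset.sum_congr rfl fun j hj => ?_
  rw [inner_sum]
  refine Finset.sum_congr rfl fun k hk => ?_
  rw [gammaTerm_inner D (a j) (b k) (ha j hj) (hb k hk)]
  push_cast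
  ring

private lemma sum_Icc_one {M : Type*} [AddCommMonoid M] (d : ℕ) (f : ℕ → M) :
    ∑ j ∈ Finset.Icc 1 d, f j = ∑ t ∈ Finset.range d, f (1+t) := by
  rw [← Finset.Ico_add_one_right_eq_Icc, Finset.sum_Ico_eq_sum_range]
  simp

private lemma real_smul_complex {ι : Type*} [Fintype ι] (r : ℝ) (x : EuclideanSpace ℂ ι) :
    r • x = (r : ℂ) • x :=
  by ext i; rw [PiLp.smul_apply, PiLp.smul_apply, Complex.real_smul, smul_eq_mul]

private lemma hdist_shift (a b : ℕ) : Nat.dist (1+a) (1+b) = Nat.dist a b := by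
  simp only [Nat.dist]; omega

private lemma double_Icc_to_range (d : ℕ) (F : ℕ → ℕ → ℝ) :
    (∑ j ∈ Finset.Icc 1 d, ∑ k ∈ Finset.Icc 1 d, F j k)
      = ∑ t ∈ Finset.range d, ∑ u ∈ Finset.range d, F (1+t) (1+u) := by
  rw [sum_Icc_one]
  exact Finset.sum_congr rfl fun t _ => sum_Icc_one d _

private lemma Ns_lower (d : ℕ) (r : ℝ) (hr0 : 0 ≤ r) :
    (d : ℝ) ≤ ∑ t ∈ Finset.range d, ∑ u ∈ Finset.range d, r ^ Nat.dist t u := by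
  calc (d : ℝ) = ∑ t ∈ Finset.range d, (1 : ℝ) := by simp
    _ ≤ _ := by
      refine Finset.sum_le_sum fun t ht => ?_
      have h := Finset.single_le_sum (f := fun u => r ^ Nat.dist t u)
        (fun u _ => pow_nonneg hr0 _) ht
      simpa [Nat.dist_self] using h

private lemma Ss_sub (d : ℕ) (r : ℝ) :
    (∑ t ∈ Finset.range d, ∑ u ∈ Finset.range d, r ^ Nat.dist (t+1) u)
      = (∑ t ∈ Finset.range d, ∑ u ∈ Finset.range d, r ^ Nat.dist t u) + (r ^ d - 1) := by
  rcases Nat.eq_zero_or_pos d with h | hd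
  · subst h; simp
  have hH := Finset.sum_range_sub (f := fun t => ∑ u ∈ Finset.range d, r ^ Nat.dist t u) d
  have h1 : ∑ t ∈ Finset.range d, ((∑ u ∈ Finset.range d, r ^ Nat.dist (t+1) u)
      - ∑ u ∈ Finset.range d, r ^ Nat.dist t u)
      = (∑ t ∈ Finset.range d, ∑ u ∈ Finset.range d, r ^ Nat.dist (t+1) u)
        - ∑ t ∈ Finset.range d, ∑ u ∈ Finset.range d, r ^ Nat.dist t u :=
    Finset.sum_sub_distrib _ _
  have hHd : ∑ u ∈ Finset.range d, r ^ Nat.dist d u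
      = ∑ u ∈ Finset.range d, r ^ (u+1) := by
    rw [← Finset.sum_range_reflect (fun u => r ^ (u+1)) d]
    refine Finset.sum_congr rfl fun u hu => ?_
    have hud : u < d := Finset.mem_range.mp hu
    congr 1
    simp only [Nat.dist]
    omega
  have hH0 : ∑ u ∈ Finset.range d, r ^ Nat.dist 0 u
      = ∑ u ∈ Finset.range d, r ^ u := by
    refine Finset.sum_congr rfl fun u _ => ?_
    congr 1
    simp only [Nat.dist]
    omega
  have h2 : ∑ u ∈ Finset.range d, r ^ (u+1) - ∑ u ∈ Finset.range d, r ^ u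
      = r ^ d - 1 := by
    rw [← Finset.sum_sub_distrib, Finset.sum_range_sub (fun u => r ^ u) d, pow_zero]
  have key : (∑ t ∈ Finset.range d, ∑ u ∈ Finset.range d, r ^ Nat.dist (t+1) u)
      - (∑ t ∈ Finset.range d, ∑ u ∈ Finset.range d, r ^ Nat.dist t u) = r ^ d - 1 := by
    rw [← h1, hH, hHd, hH0, h2]
  linarith

set_option maxHeartbeats 1600000 in
/-- The shift-embezzlement computation: the overlap
`⟨11 ⊗ Γ_d | W(φ⁺ ⊗ Γ_d)⟩ = (N_d − O(√d))/N_d = 1 − O(1/d)`, and consequently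
`‖W(|φ⁺⟩ ⊗ |Γ_d⟩) − |11⟩ ⊗ |Γ_d⟩‖² = 2 − 2 Re⟨·,·⟩ = O(1/d)`. -/
theorem embezzlement_overlap :
    ∃ C > 0, ∀ d : ℕ, 1 ≤ d →
      (embNorm d - C * Real.sqrt d) / embNorm d
          ≤ (⟪e11Gamma d, leftShift d (phiPlusGamma d)⟫_ℂ).re ∧
      1 - C / d ≤ (⟪e11Gamma d, leftShift d (phiPlusGamma d)⟫_ℂ).re ∧
      ‖leftShift d (phiPlusGamma d) - e11Gamma d‖ ^ 2
          = 2 - 2 * (⟪e11Gamma d, leftShift d (phiPlusGamma d)⟫_ℂ).re ∧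
      ‖leftShift d (phiPlusGamma d) - e11Gamma d‖ ^ 2 ≤ C / d := by
  refine ⟨2, by norm_num, fun d hd => ?_⟩
  have hd1 : (1:ℝ) ≤ (d:ℝ) := by exact_mod_cast hd
  have hd0 : (0:ℝ) < (d:ℝ) := by linarith
  have hr0 : (0:ℝ) ≤ (Real.sqrt 2)⁻¹ := by positivity
  have hr1 : ((Real.sqrt 2)⁻¹ : ℝ) ≤ 1 := by
    apply inv_le_one_of_one_le₀
    rw [Real.one_le_sqrt]
    norm_num
  have hrd0 : (0:ℝ) ≤ (Real.sqrt 2)⁻¹ ^ d := pow_nonneg hr0 d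
  have hrd1 : ((Real.sqrt 2)⁻¹ : ℝ) ^ d ≤ 1 := pow_le_one₀ hr0 hr1
  -- the two key real sums
  set Ns : ℝ := ∑ t ∈ Finset.range d, ∑ u ∈ Finset.range d,
      (Real.sqrt 2)⁻¹ ^ Nat.dist t u with hNsdef
  set Ss : ℝ := ∑ t ∈ Finset.range d, ∑ u ∈ Finset.range d,
      (Real.sqrt 2)⁻¹ ^ Nat.dist (t+1) u with hSsdef
  have hNd : (d:ℝ) ≤ Ns := Ns_lower d _ hr0
  have hN0 : (0:ℝ) < Ns := lt_of_lt_of_le hd0 hNd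
  have hSeq : Ss = Ns + ((Real.sqrt 2)⁻¹ ^ d - 1) := Ss_sub d _
  -- Icc-sum conversions
  have hsumN : (∑ j ∈ Finset.Icc 1 d, ∑ k ∈ Finset.Icc 1 d,
      ((Real.sqrt 2)⁻¹ : ℝ) ^ Nat.dist j k) = Ns := by
    rw [double_Icc_to_range, hNsdef]
    exact Finset.sum_congr rfl fun t _ => Finset.sum_congr rfl fun u _ => by
      rw [hdist_shift]
  have hsumN' : (∑ j ∈ Finset.Icc 1 d, ∑ k ∈ Finset.Icc 1 d,
      ((Real.sqrt 2)⁻¹ : ℝ) ^ Nat.dist (j+1) (k+1)) = Ns := by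
    rw [double_Icc_to_range, hNsdef]
    refine Finset.sum_congr rfl fun t _ => Finset.sum_congr rfl fun u _ => ?_
    congr 1
    simp only [Nat.dist]
    omega
  have hsumS : (∑ j ∈ Finset.Icc 1 d, ∑ k ∈ Finset.Icc 1 d,
      ((Real.sqrt 2)⁻¹ : ℝ) ^ Nat.dist (j+1) k) = Ss := by
    rw [double_Icc_to_range, hSsdef]
    refine Finset.sum_congr rfl fun t _ => Finset.sum_congr rfl fun u _ => ?_
    congr 1
    simp only [Nat.dist]
    omega
  -- embNorm d = Ns
  have hIcc : ∀ j ∈ Finset.Icc 1 d, j ≤ d := fun j hj => (Finset.mem_Icc.mp hj).2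
  have hembN : embNorm d = Ns := by
    rw [embNorm, ← inner_self_eq_norm_sq (𝕜 := ℂ) (∑ j ∈ Finset.Icc 1 d, gammaTerm d j),
      inner_sum_sum d (fun j => j) (fun j => j) (Finset.Icc 1 d) hIcc hIcc]
    rw [RCLike.re_to_complex, Complex.ofReal_re, hsumN]
  -- scalar arithmetic
  have hcc : ∀ x : ℝ, (1/Real.sqrt (embNorm d)) * ((1/Real.sqrt (embNorm d)) * x)
      = x / Ns := by
    intro x
    rw [hembN, one_div, ← mul_assoc, ← mul_inv, Real.mul_self_sqrt hN0.le,
      inv_mul_eq_div]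
  -- the inner product
  have hIcc1 : ∀ j ∈ Finset.Icc 1 d, j + 1 ≤ d + 1 := fun j hj => by
    have := hIcc j hj; omega
  have hIcc0 : ∀ j ∈ Finset.Icc 1 d, j ≤ d + 1 := fun j hj => by
    have := hIcc j hj; omega
  have hinner : (⟪e11Gamma d, leftShift d (phiPlusGamma d)⟫_ℂ) = ((Ss / Ns : ℝ) : ℂ) := by
    rw [e11Gamma_eq, leftShift_phiPlusGamma_eq]
    simp only [real_smul_complex]
    rw [inner_smul_left, inner_smul_right, Complex.conj_ofReal,
      inner_sum_sum (d+1) (fun j => j+1) (fun j => j) (Finset.Icc 1 d) hIcc1 hIcc0,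
      hsumS]
    rw [← Complex.ofReal_mul, ← Complex.ofReal_mul, hcc]
  have hre : (⟪e11Gamma d, leftShift d (phiPlusGamma d)⟫_ℂ).re = Ss / Ns := by
    rw [hinner, Complex.ofReal_re]
  -- unit norms
  have hnorm_y : ‖e11Gamma d‖ ^ 2 = 1 := by
    rw [← inner_self_eq_norm_sq (𝕜 := ℂ) (e11Gamma d), e11Gamma_eq]
    simp only [real_smul_complex]
    rw [inner_smul_left, inner_smul_right, Complex.conj_ofReal,
      inner_sum_sum (d+1) (fun j => j+1) (fun j => j+1) (Finset.Icc 1 d) hIcc1 hIcc1,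
      hsumN']
    rw [← Complex.ofReal_mul, ← Complex.ofReal_mul, hcc, RCLike.re_to_complex,
      Complex.ofReal_re]
    exact div_self hN0.ne'
  have hnorm_x : ‖leftShift d (phiPlusGamma d)‖ ^ 2 = 1 := by
    rw [← inner_self_eq_norm_sq (𝕜 := ℂ) (leftShift d (phiPlusGamma d)), leftShift_phiPlusGamma_eq]
    simp only [real_smul_complex]
    rw [inner_smul_left, inner_smul_right, Complex.conj_ofReal,
      inner_sum_sum (d+1) (fun j => j) (fun j => j) (Finset.Icc 1 d) hIcc0 hIcc0,
      hsumN]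
    rw [← Complex.ofReal_mul, ← Complex.ofReal_mul, hcc, RCLike.re_to_complex,
      Complex.ofReal_re]
    exact div_self hN0.ne'
  -- the norm identity
  have heq : ‖leftShift d (phiPlusGamma d) - e11Gamma d‖ ^ 2
      = 2 - 2 * (⟪e11Gamma d, leftShift d (phiPlusGamma d)⟫_ℂ).re := by
    rw [norm_sub_sq (𝕜 := ℂ), hnorm_x, hnorm_y]
    have hsymm : (⟪leftShift d (phiPlusGamma d), e11Gamma d⟫_ℂ)
        = (starRingEnd ℂ) (⟪e11Gamma d, leftShift d (phiPlusGamma d)⟫_ℂ) :=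
      (inner_conj_symm _ _).symm
    rw [RCLike.re_to_complex, hsymm, Complex.conj_re]
    ring
  -- key bound
  have key1 : (1 - (Real.sqrt 2)⁻¹ ^ d) / Ns ≤ 1 / (d:ℝ) :=
    div_le_div₀ zero_le_one (by linarith) hd0 hNd
  have hSoverN : Ss / Ns = 1 - (1 - (Real.sqrt 2)⁻¹ ^ d) / Ns := by
    rw [hSeq]
    field_simp
    ring
  refine ⟨?_, ?_, heq, ?_⟩
  · rw [hembN, hre, hSoverN]
    have hsq1 : (1:ℝ) ≤ Real.sqrt (d:ℝ) := Real.one_le_sqrt.mpr hd1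
    have hnum : (1 - (Real.sqrt 2)⁻¹ ^ d) / Ns ≤ 2 * Real.sqrt (d:ℝ) / Ns :=
      div_le_div₀ (by positivity) (by linarith) hN0 le_rfl
    have : (Ns - 2 * Real.sqrt (d:ℝ)) / Ns = 1 - 2 * Real.sqrt (d:ℝ) / Ns := by
      field_simp
    rw [this]
    linarith
  · rw [hre, hSoverN]
    have h12 : (1:ℝ)/(d:ℝ) ≤ 2/(d:ℝ) := by
      rw [div_le_div_iff₀ hd0 hd0]; nlinarith
    linarith
  · rw [heq, hre, hSoverN]
    have h2 : 2 - 2 * (1 - (1 - (Real.sqrt 2)⁻¹ ^ d) / Ns)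
        = 2 * ((1 - (Real.sqrt 2)⁻¹ ^ d) / Ns) := by ring
    have h3 : (2:ℝ) * (1/(d:ℝ)) = 2/(d:ℝ) := by ring
    rw [h2, ← h3]
    nlinarith [key1]

end
end
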